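/- Let ψ₁, ψ₂, ψ₃, ψ₄ ∈ ℝ⁴ be linearly independent real unit vectors and let (p₁, p₂, p₃, p₄) be a probability vector with all pᵢ > 0 such that Σᵢ pᵢ C(ψᵢψᵢᵀ) > 0. Then the mixture ρ = Σᵢ pᵢ ψᵢψᵢᵀ is strictly suboptimal: C(ρ) < Σᵢ pᵢ C(ψᵢψᵢᵀ). In particular, there is no quadruple of linearly independent real pure states, at least one of which is entangled, all of whose mixtures are optimally entangled. -/

import Mathlib

open Matrix Polynomial

noncomputable section

/-- `J = σ_y ⊗ σ_y` as a complex 4×4 matrix (standard product basis). -/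
def Jc : Matrix (Fin 4) (Fin 4) ℂ :=
  !![0, 0, 0, -1; 0, 0, 1, 0; 0, 1, 0, 0; -1, 0, 0, 0]

/-- `J = σ_y ⊗ σ_y` as a real 4×4 matrix (standard product basis). -/
def Jr : Matrix (Fin 4) (Fin 4) ℝ :=
  !![0, 0, 0, -1; 0, 0, 1, 0; 0, 1, 0, 0; -1, 0, 0, 0]

/-- The spin-flipped matrix `ρ̃ = J ρ̄ J`. -/
def spinFlip (ρ : Matrix (Fin 4) (Fin 4) ℂ) : Matrix (Fin 4) (Fin 4) ℂ :=
  Jc * ρ.map (starRingEnd ℂ) * Jc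

/-- The concurrence of a two-qubit density matrix `ρ`:
`max (0, √μ₁ − √μ₂ − √μ₃ − √μ₄)` where `μ₁ ≥ μ₂ ≥ μ₃ ≥ μ₄` are the (real,
nonnegative) eigenvalues of `ρ ρ̃` listed with multiplicity. -/
def concurrence (ρ : Matrix (Fin 4) (Fin 4) ℂ) : ℝ :=
  let l : List ℝ :=
    (((ρ * spinFlip ρ).charpoly.roots.map Complex.re).sort (· ≤ ·))
  max 0 (Real.sqrt (l.getD 3 0) - Real.sqrt (l.getD 2 0) -
    Real.sqrt (l.getD 1 0) - Real.sqrt (l.getD 0 0))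

/-- The (complex) density matrix of the pure state given by a real 4-vector `ψ`,
namely `ψ ψᵀ`. -/
def pureState (ψ : Fin 4 → ℝ) : Matrix (Fin 4) (Fin 4) ℂ :=
  (Matrix.vecMulVec ψ ψ).map Complex.ofReal

end



lemma charpoly_conj {n R : Type*} [Fintype n] [DecidableEq n] [CommRing R]
    (P A : Matrix n n R) (h : IsUnit P.det) :
    (P * A * P⁻¹).charpoly = A.charpoly := by
  have hPP : P * P⁻¹ = 1 := mul_nonsing_inv P h
  have key : charmatrix (P * A * P⁻¹) = P.map C * charmatrix A * (P⁻¹).map C := by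
    rw [charmatrix, charmatrix, mul_sub, sub_mul]
    rw [show (C.mapMatrix (P * A * P⁻¹) : Matrix n n R[X]) = P.map C * C.mapMatrix A * (P⁻¹).map C by
      simp only [RingHom.mapMatrix_apply, ← Matrix.map_mul]]
    congr 1
    rw [show P.map (C : R →+* R[X]) * (scalar n X) * (P⁻¹).map C = scalar n X * (P.map C * (P⁻¹).map C) by
        rw [← (scalar_commute X (Commute.all X) (P.map C)).eq, Matrix.mul_assoc],
      ← Matrix.map_mul, hPP]
    simp
  have hdet : (P.map (C : R →+* R[X])).det * ((P⁻¹).map (C : R →+* R[X])).det = 1 := by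
    rw [← det_mul, ← Matrix.map_mul, hPP]
    simp
  rw [Matrix.charpoly, Matrix.charpoly, key, det_mul, det_mul]
  linear_combination A.charmatrix.det * hdet


lemma key4 (a b c d : ℝ) (hb : b ≠ 0) (hc : c ≠ 0) (hd : d ≠ 0)
    (hprod : 0 < a * b * c * d) :
    |a| - |b| - |c| - |d| < |a + b + c + d| := by
  have ha : a ≠ 0 := by rintro rfl; simp at hprod
  have e1 := le_abs_self (a + b + c + d)
  have e2 := neg_abs_le (a + b + c + d)
  rcases ha.lt_or_gt with ha | ha <;> rcases hb.lt_or_gt with hb | hb <;>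
    rcases hc.lt_or_gt with hc | hc <;> rcases hd.lt_or_gt with hd | hd <;>
  first
    | (exfalso; nlinarith [mul_pos (mul_pos hb hc) hd])
    | (exfalso; nlinarith [mul_pos (mul_pos (neg_pos.2 hb) (neg_pos.2 hc)) (neg_pos.2 hd)])
    | (exfalso; nlinarith [mul_pos (mul_pos hb hc) (neg_pos.2 hd)])
    | (exfalso; nlinarith [mul_pos (mul_pos hb (neg_pos.2 hc)) hd])
    | (exfalso; nlinarith [mul_pos (mul_pos (neg_pos.2 hb) hc) hd])
    | (exfalso; nlinarith [mul_pos (mul_pos hb (neg_pos.2 hc)) (neg_pos.2 hd)])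
    | (exfalso; nlinarith [mul_pos (mul_pos (neg_pos.2 hb) hc) (neg_pos.2 hd)])
    | (exfalso; nlinarith [mul_pos (mul_pos (neg_pos.2 hb) (neg_pos.2 hc)) hd])
    | (first | rw [abs_of_pos ha] | rw [abs_of_neg ha]) <;>
      (first | rw [abs_of_pos hb] | rw [abs_of_neg hb]) <;>
      (first | rw [abs_of_pos hc] | rw [abs_of_neg hc]) <;>
      (first | rw [abs_of_pos hd] | rw [abs_of_neg hd]) <;>
      linarith

lemma map_ofReal_mul (A B : Matrix (Fin 4) (Fin 4) ℝ) :
    (A * B).map Complex.ofReal = A.map Complex.ofReal * B.map Complex.ofReal := by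
  ext i j
  simp [Matrix.mul_apply, Matrix.map_apply]

lemma Jc_eq : Jc = Jr.map Complex.ofReal := by
  ext i j
  fin_cases i <;> fin_cases j <;> simp [Jc, Jr, Matrix.map_apply, Matrix.vecHead, Matrix.vecTail]

lemma conj_map_ofReal (A : Matrix (Fin 4) (Fin 4) ℝ) :
    (A.map Complex.ofReal).map (starRingEnd ℂ) = A.map Complex.ofReal := by
  ext i j
  simp [Matrix.map_apply, Complex.conj_ofReal]

set_option maxHeartbeats 1600000 in
lemma charpoly_vecMulVec (x y : Fin 4 → ℝ) :
    (vecMulVec x y).charpoly = X ^ 4 - C (x ⬝ᵥ y) * X ^ 3 := by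
  rw [Matrix.charpoly]
  rw [show ((vecMulVec x y).charmatrix : Matrix (Fin 4) (Fin 4) ℝ[X]) =
    of ![![X - C (x 0 * y 0), -C (x 0 * y 1), -C (x 0 * y 2), -C (x 0 * y 3)],
       ![-C (x 1 * y 0), X - C (x 1 * y 1), -C (x 1 * y 2), -C (x 1 * y 3)],
       ![-C (x 2 * y 0), -C (x 2 * y 1), X - C (x 2 * y 2), -C (x 2 * y 3)],
       ![-C (x 3 * y 0), -C (x 3 * y 1), -C (x 3 * y 2), X - C (x 3 * y 3)]] by
    ext i j
    fin_cases i <;> fin_cases j <;>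
      simp [charmatrix_apply, vecMulVec_apply, diagonal_apply]]
  simp only [det_succ_row_zero, Fin.sum_univ_succ, det_fin_three]
  simp only [dotProduct, Fin.sum_univ_four, _root_.map_mul, _root_.map_add]
  norm_num [Fin.succAbove, submatrix_apply, Fin.lt_def, Fin.castSucc, Fin.castAdd, Fin.castLE]
  simp [Matrix.cons_val]
  ring

lemma pure_prod_eq (φ : Fin 4 → ℝ) :
    pureState φ * spinFlip (pureState φ) =
      ((vecMulVec φ φ * Jr) * (vecMulVec φ φ * Jr)).map Complex.ofReal := by
  rw [spinFlip, pureState, conj_map_ofReal, Jc_eq]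
  simp only [← map_ofReal_mul]
  noncomm_ring

lemma vecMulVec_mul_Jr (φ : Fin 4 → ℝ) :
    vecMulVec φ φ * Jr = vecMulVec φ (φ ᵥ* Jr) := by
  ext i j
  simp [Matrix.mul_apply, vecMulVec_apply, Matrix.vecMul, dotProduct, Finset.mul_sum, mul_assoc]

lemma vecMulVec_sq (x u : Fin 4 → ℝ) :
    vecMulVec x u * vecMulVec x u = vecMulVec x ((u ⬝ᵥ x) • u) := by
  ext i j
  simp [Matrix.mul_apply, vecMulVec_apply, dotProduct, Finset.sum_mul, Finset.mul_sum]
  ring_nf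
  rw [Finset.sum_congr rfl]
  intro k _
  ring

lemma roots_pure (φ : Fin 4 → ℝ) :
    ((pureState φ * spinFlip (pureState φ)).charpoly.roots.map Complex.re)
      = {0, 0, 0, (φ ⬝ᵥ (Jr *ᵥ φ)) ^ 2} := by
  set c := φ ⬝ᵥ (Jr *ᵥ φ) with hc
  have hcp : (pureState φ * spinFlip (pureState φ)).charpoly
      = X ^ 3 * (X - C (((c ^ 2 : ℝ) : ℂ))) := by
    rw [pure_prod_eq, vecMulVec_mul_Jr, vecMulVec_sq,
      show (Complex.ofReal : ℝ → ℂ) = ⇑Complex.ofRealHom from rfl,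
      Matrix.charpoly_map, charpoly_vecMulVec]
    have h1 : φ ⬝ᵥ (((φ ᵥ* Jr) ⬝ᵥ φ) • (φ ᵥ* Jr)) = c ^ 2 := by
      rw [dotProduct_smul, ← Matrix.dotProduct_mulVec, ← hc, dotProduct_comm,
        ← Matrix.dotProduct_mulVec, ← hc, smul_eq_mul, sq]
    rw [h1]
    simp only [Polynomial.map_sub, Polynomial.map_mul, Polynomial.map_pow, Polynomial.map_X,
      Polynomial.map_C]
    push_cast
    ring
  rw [hcp, Polynomial.roots_mul (((monic_X_pow 3).mul (monic_X_sub_C _)).ne_zero),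
    Polynomial.roots_pow, Polynomial.roots_X, Polynomial.roots_X_sub_C]
  rw [show (3 : ℕ) • ({(0 : ℂ)} : Multiset ℂ) + {((c ^ 2 : ℝ) : ℂ)}
      = {0, 0, 0, ((c ^ 2 : ℝ) : ℂ)} by
    rw [show (3 : ℕ) = 2 + 1 from rfl, add_smul, two_smul, one_smul]; rfl]
  simp [← Complex.ofReal_pow]

lemma concurrence_pureState (φ : Fin 4 → ℝ) :
    concurrence (pureState φ) = |φ ⬝ᵥ (Jr *ᵥ φ)| := by
  set c := φ ⬝ᵥ (Jr *ᵥ φ) with hc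
  have hperm : (((pureState φ * spinFlip (pureState φ)).charpoly.roots.map
      Complex.re).sort (· ≤ ·)).Perm [0, 0, 0, c ^ 2] := by
    rw [← Multiset.coe_eq_coe, Multiset.sort_eq, roots_pure]
    rfl
  have hsort : (((pureState φ * spinFlip (pureState φ)).charpoly.roots.map
      Complex.re).sort (· ≤ ·)) = [0, 0, 0, c ^ 2] :=
    List.Perm.eq_of_pairwise' (Multiset.pairwise_sort _ _)
      (by simp [List.pairwise_cons, sq_nonneg]) hperm
  simp only [concurrence, hsort]
  simp [Real.sqrt_sq_eq_abs, abs_nonneg, max_eq_right]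

noncomputable section Mix
variable (ψ : Fin 4 → Fin 4 → ℝ) (p : Fin 4 → ℝ)

def Vm : Matrix (Fin 4) (Fin 4) ℝ := (Matrix.of ψ)ᵀ * diagonal (fun i => Real.sqrt (p i))

def τm : Matrix (Fin 4) (Fin 4) ℝ := (Vm ψ p)ᵀ * Jr * Vm ψ p

lemma Vm_transpose : (Vm ψ p)ᵀ = diagonal (fun i => Real.sqrt (p i)) * Matrix.of ψ := by
  rw [Vm, transpose_mul, diagonal_transpose, transpose_transpose]

lemma Jr_transpose : Jrᵀ = Jr := by
  ext i j
  fin_cases i <;> fin_cases j <;> simp [Jr, Matrix.vecHead, Matrix.vecTail]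

lemma τm_transpose : (τm ψ p)ᵀ = τm ψ p := by
  rw [τm, transpose_mul, transpose_mul, transpose_transpose, Jr_transpose, Matrix.mul_assoc]

lemma τm_isHermitian : (τm ψ p).IsHermitian := by
  rw [Matrix.IsHermitian]
  ext i j
  have := congrFun (congrFun (τm_transpose ψ p) i) j
  simpa [Matrix.conjTranspose_apply, Matrix.transpose_apply] using this

lemma τm_diag (hp : ∀ i, 0 < p i) (i : Fin 4) :
    τm ψ p i i = p i * (ψ i ⬝ᵥ (Jr *ᵥ ψ i)) := by
  rw [τm, Vm_transpose, Vm]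
  rw [show diagonal (fun i => Real.sqrt (p i)) * of ψ * Jr * ((of ψ)ᵀ *
      diagonal (fun i => Real.sqrt (p i)))
    = diagonal (fun i => Real.sqrt (p i)) * (of ψ * Jr * (of ψ)ᵀ) *
      diagonal (fun i => Real.sqrt (p i)) by noncomm_ring]
  rw [Matrix.mul_diagonal, Matrix.diagonal_mul]
  rw [show Real.sqrt (p i) * (of ψ * Jr * (of ψ)ᵀ) i i * Real.sqrt (p i)
    = (Real.sqrt (p i) * Real.sqrt (p i)) * (of ψ * Jr * (of ψ)ᵀ) i i by ring,
    Real.mul_self_sqrt (hp i).le]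
  congr 1
  simp only [Matrix.mul_apply, Matrix.transpose_apply, Matrix.of_apply, dotProduct,
    Matrix.mulVec, Finset.sum_mul, dotProduct]
  rw [Finset.sum_comm]
  refine Finset.sum_congr rfl fun k _ => ?_
  rw [Finset.mul_sum]
  refine Finset.sum_congr rfl fun l _ => ?_
  ring

lemma mix_eq (hp : ∀ i, 0 < p i) :
    (∑ i, p i • pureState (ψ i)) = (Vm ψ p * (Vm ψ p)ᵀ).map Complex.ofReal := by
  ext j k
  simp only [Matrix.sum_apply, Matrix.smul_apply, pureState, Matrix.map_apply,
    vecMulVec_apply, Matrix.mul_apply, Vm, Vm_transpose, Matrix.mul_diagonal,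
    Matrix.diagonal_mul, Matrix.transpose_apply, Matrix.of_apply, Complex.ofReal_sum,
    Matrix.diagonal_apply, mul_ite, ite_mul, mul_zero, zero_mul, Finset.sum_ite_eq,
    Finset.sum_ite_eq', Finset.mem_univ, if_true]
  refine Finset.sum_congr rfl fun i _ => ?_
  have h := Real.mul_self_sqrt (hp i).le
  simp only [Complex.real_smul]
  push_cast
  norm_cast
  linear_combination (-(ψ i j * ψ i k)) * h

lemma Jr_det : Jr.det = 1 := by
  simp [Jr, det_succ_row_zero, Fin.sum_univ_succ]
  norm_num [Fin.succAbove, Matrix.vecHead, Matrix.vecTail, Fin.castSucc, Fin.castAdd,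
    Fin.castLE, Fin.lt_def]

lemma Vm_det_isUnit (hind : LinearIndependent ℝ ψ) (hp : ∀ i, 0 < p i) :
    IsUnit (Vm ψ p).det := by
  rw [Vm, det_mul, det_transpose, det_diagonal]
  apply IsUnit.mul
  · exact (Matrix.isUnit_iff_isUnit_det _).mp (linearIndependent_rows_iff_isUnit.mp hind)
  · exact isUnit_iff_ne_zero.mpr (Finset.prod_ne_zero_iff.mpr fun i _ =>
      Real.sqrt_ne_zero'.mpr (hp i) )

lemma τm_det_pos (hind : LinearIndependent ℝ ψ) (hp : ∀ i, 0 < p i) :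
    0 < (τm ψ p).det := by
  rw [τm, det_mul, det_mul, det_transpose, Jr_det, mul_one]
  have h := (Vm_det_isUnit ψ p hind hp).ne_zero
  exact mul_self_pos.mpr h

lemma τm_sq_charpoly :
    (τm ψ p * τm ψ p).charpoly
      = ∏ i, (X - C ((τm_isHermitian ψ p).eigenvalues i ^ 2)) := by
  have hH := τm_isHermitian ψ p
  set U : Matrix (Fin 4) (Fin 4) ℝ := (hH.eigenvectorUnitary : Matrix (Fin 4) (Fin 4) ℝ) with hU
  have hsp : τm ψ p = U * diagonal hH.eigenvalues * star U := by
    have := hH.spectral_theorem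
    rwa [RCLike.ofReal_real_eq_id, Function.id_comp] at this
  have hUstar : U * star U = 1 := mem_unitaryGroup_iff.mp hH.eigenvectorUnitary.2
  have hUstar' : star U * U = 1 := mem_unitaryGroup_iff'.mp hH.eigenvectorUnitary.2
  have hUinv : U⁻¹ = star U := inv_eq_right_inv hUstar
  have hdetU : IsUnit U.det := isUnit_det_of_right_inverse hUstar
  have hττ : τm ψ p * τm ψ p = U * diagonal (fun i => hH.eigenvalues i ^ 2) * U⁻¹ := by
    rw [hUinv]
    conv_lhs => rw [hsp]
    rw [show U * diagonal hH.eigenvalues * star U * (U * diagonal hH.eigenvalues * star U)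
      = U * diagonal hH.eigenvalues * (star U * U) * diagonal hH.eigenvalues * star U by
        noncomm_ring, hUstar', Matrix.mul_one,
      show U * diagonal hH.eigenvalues * diagonal hH.eigenvalues * star U
      = U * (diagonal hH.eigenvalues * diagonal hH.eigenvalues) * star U by noncomm_ring,
      diagonal_mul_diagonal]
    simp [Matrix.diagonal_apply, sq]
  rw [hττ, charpoly_conj U _ hdetU,
    charpoly_of_upperTriangular _ (Matrix.blockTriangular_diagonal _)]
  refine Finset.prod_congr rfl fun i _ => ?_
  rw [Matrix.diagonal_apply_eq]

lemma mix_charpoly (hind : LinearIndependent ℝ ψ) (hp : ∀ i, 0 < p i) :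
    ((∑ i, p i • pureState (ψ i)) * spinFlip (∑ i, p i • pureState (ψ i))).charpoly
      = ∏ i, (X - C ((((τm_isHermitian ψ p).eigenvalues i ^ 2 : ℝ) : ℂ))) := by
  have hV := Vm_det_isUnit ψ p hind hp
  have h1 : (∑ i, p i • pureState (ψ i)) * spinFlip (∑ i, p i • pureState (ψ i))
      = (Vm ψ p * (Vm ψ p)ᵀ * Jr * (Vm ψ p * (Vm ψ p)ᵀ) * Jr).map Complex.ofReal := by
    rw [mix_eq _ _ hp, spinFlip, conj_map_ofReal, Jc_eq]
    simp only [← map_ofReal_mul]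
    congr 1
    noncomm_ring
  have h2 : Vm ψ p * (Vm ψ p)ᵀ * Jr * (Vm ψ p * (Vm ψ p)ᵀ) * Jr
      = Vm ψ p * (τm ψ p * τm ψ p) * (Vm ψ p)⁻¹ := by
    have hVV : Vm ψ p * (Vm ψ p)⁻¹ = 1 := mul_nonsing_inv _ hV
    rw [τm, show Vm ψ p * ((Vm ψ p)ᵀ * Jr * Vm ψ p * ((Vm ψ p)ᵀ * Jr * Vm ψ p)) * (Vm ψ p)⁻¹
      = Vm ψ p * (Vm ψ p)ᵀ * Jr * (Vm ψ p * (Vm ψ p)ᵀ) * Jr * (Vm ψ p * (Vm ψ p)⁻¹) by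
        noncomm_ring, hVV, Matrix.mul_one]
  rw [h1, show (Complex.ofReal : ℝ → ℂ) = ⇑Complex.ofRealHom from rfl, Matrix.charpoly_map,
    h2, charpoly_conj _ _ hV, τm_sq_charpoly]
  rw [Polynomial.map_prod]
  refine Finset.prod_congr rfl fun i _ => ?_
  simp

lemma mix_roots (hind : LinearIndependent ℝ ψ) (hp : ∀ i, 0 < p i) :
    ((∑ i, p i • pureState (ψ i)) * spinFlip (∑ i, p i • pureState (ψ i))).charpoly.roots.map
        Complex.re
      = Finset.univ.val.map (fun i => (τm_isHermitian ψ p).eigenvalues i ^ 2) := by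
  rw [mix_charpoly ψ p hind hp]
  rw [show (∏ i, (X - C ((((τm_isHermitian ψ p).eigenvalues i ^ 2 : ℝ) : ℂ))))
      = ((Finset.univ.val.map fun i =>
          (((τm_isHermitian ψ p).eigenvalues i ^ 2 : ℝ) : ℂ)).map fun a => X - C a).prod by
    rw [Multiset.map_map, Finset.prod_eq_multiset_prod]
    rfl]
  rw [roots_multiset_prod_X_sub_C, Multiset.map_map]
  refine Multiset.map_congr rfl fun x _ => ?_
  simp [← Complex.ofReal_pow]

lemma eig_prod : ∏ i, (τm_isHermitian ψ p).eigenvalues i = (τm ψ p).det := by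
  have h := (τm_isHermitian ψ p).det_eq_prod_eigenvalues
  simpa using h.symm

lemma eig_sum : ∑ i, (τm_isHermitian ψ p).eigenvalues i = ∑ i, τm ψ p i i := by
  have hH := τm_isHermitian ψ p
  set U : Matrix (Fin 4) (Fin 4) ℝ := (hH.eigenvectorUnitary : Matrix (Fin 4) (Fin 4) ℝ) with hU
  have hsp : τm ψ p = U * diagonal hH.eigenvalues * star U := by
    have := hH.spectral_theorem
    rwa [RCLike.ofReal_real_eq_id, Function.id_comp] at this
  have hUstar' : star U * U = 1 := mem_unitaryGroup_iff'.mp hH.eigenvectorUnitary.2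
  have h1 : (τm ψ p).trace = ∑ i, (τm_isHermitian ψ p).eigenvalues i := by
    conv_lhs => rw [hsp]
    rw [Matrix.trace_mul_comm, ← Matrix.mul_assoc, hUstar', Matrix.one_mul]
    simp [Matrix.trace, Matrix.diag]
  rw [← h1]
  simp [Matrix.trace, Matrix.diag]

lemma key4' (E : Fin 4 → ℝ) (hE : ∀ i, E i ≠ 0) (hprod : 0 < E 0 * E 1 * E 2 * E 3) (i₀ : Fin 4) :
    2 * |E i₀| - (|E 0| + |E 1| + |E 2| + |E 3|) < |E 0 + E 1 + E 2 + E 3| := by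
  have h4 : ∀ j : Fin 4, j = 0 ∨ j = 1 ∨ j = 2 ∨ j = 3 := by decide
  rcases h4 i₀ with rfl | rfl | rfl | rfl
  · have h := key4 (E 0) (E 1) (E 2) (E 3) (hE 1) (hE 2) (hE 3) hprod
    linarith
  · have h := key4 (E 1) (E 0) (E 2) (E 3) (hE 0) (hE 2) (hE 3)
      (by rw [show E 1 * E 0 * E 2 * E 3 = E 0 * E 1 * E 2 * E 3 by ring]; exact hprod)
    rw [show E 0 + E 1 + E 2 + E 3 = E 1 + E 0 + E 2 + E 3 by ring]
    linarith
  · have h := key4 (E 2) (E 0) (E 1) (E 3) (hE 0) (hE 1) (hE 3)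
      (by rw [show E 2 * E 0 * E 1 * E 3 = E 0 * E 1 * E 2 * E 3 by ring]; exact hprod)
    rw [show E 0 + E 1 + E 2 + E 3 = E 2 + E 0 + E 1 + E 3 by ring]
    linarith
  · have h := key4 (E 3) (E 0) (E 1) (E 2) (hE 0) (hE 1) (hE 2)
      (by rw [show E 3 * E 0 * E 1 * E 2 = E 0 * E 1 * E 2 * E 3 by ring]; exact hprod)
    rw [show E 0 + E 1 + E 2 + E 3 = E 3 + E 0 + E 1 + E 2 by ring]
    linarith

end Mix


/-- Mixtures of four linearly independent real pure states, at least one of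
which is entangled, are never optimal: the concurrence of the mixture is
strictly below the weighted sum of the pure-state concurrences. -/
theorem rank_four_never_optimal
    (ψ : Fin 4 → Fin 4 → ℝ) (hind : LinearIndependent ℝ ψ)
    (hunit : ∀ i, ∑ j, ψ i j ^ 2 = 1)
    (p : Fin 4 → ℝ) (hp : ∀ i, 0 < p i) (hsum : ∑ i, p i = 1)
    (hent : 0 < ∑ i, p i * concurrence (pureState (ψ i))) :
    concurrence (∑ i, p i • pureState (ψ i)) <
      ∑ i, p i * concurrence (pureState (ψ i)) := by
    classical
  have hH := τm_isHermitian ψ p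
  have hRHS : ∑ i, p i * concurrence (pureState (ψ i)) = ∑ i, |τm ψ p i i| := by
    refine Finset.sum_congr rfl fun i _ => ?_
    rw [concurrence_pureState, τm_diag ψ p hp, abs_mul, abs_of_pos (hp i)]
  have hdet := τm_det_pos ψ p hind hp
  have hprodE : 0 < hH.eigenvalues 0 * hH.eigenvalues 1 * hH.eigenvalues 2 * hH.eigenvalues 3 := by
    have h := eig_prod ψ p
    rw [← h, Fin.prod_univ_four] at hdet
    exact hdet
  have hEne : ∀ i, hH.eigenvalues i ≠ 0 := by
    intro i h0
    have h4 : ∀ j : Fin 4, j = 0 ∨ j = 1 ∨ j = 2 ∨ j = 3 := by decide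
    rcases h4 i with rfl | rfl | rfl | rfl <;> rw [h0] at hprodE <;> simp at hprodE
  have habs : |∑ i, hH.eigenvalues i| ≤ ∑ i, |τm ψ p i i| := by
    rw [eig_sum ψ p]
    exact Finset.abs_sum_le_sum_abs _ _
  have hroots := mix_roots ψ p hind hp
  set l := (((∑ i, p i • pureState (ψ i)) *
      spinFlip (∑ i, p i • pureState (ψ i))).charpoly.roots.map Complex.re).sort (· ≤ ·) with hl
  have hlen : l.length = 4 := by
    rw [hl, Multiset.length_sort, hroots]
    simp
  obtain ⟨a, b, c, d, hlabcd⟩ : ∃ a b c d, l = [a, b, c, d] := by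
    match l, hlen with
    | [a, b, c, d], _ => exact ⟨a, b, c, d, rfl⟩
  have hcoe : (l : Multiset ℝ) = Finset.univ.val.map (fun i => hH.eigenvalues i ^ 2) := by
    rw [hl, Multiset.sort_eq, hroots]
  obtain ⟨i₀, hi₀⟩ : ∃ i₀, hH.eigenvalues i₀ ^ 2 = d := by
    have hdmem : d ∈ (l : Multiset ℝ) := by rw [hlabcd]; simp
    rw [hcoe] at hdmem
    obtain ⟨i₀, _, h⟩ := Multiset.mem_map.mp hdmem
    exact ⟨i₀, h⟩
  have hsqsum : Real.sqrt a + Real.sqrt b + Real.sqrt c + Real.sqrt d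
      = ∑ i, |hH.eigenvalues i| := by
    have h1 : ((l : Multiset ℝ).map Real.sqrt).sum = ∑ i, |hH.eigenvalues i| := by
      rw [hcoe, Multiset.map_map]
      rw [show ((Finset.univ.val.map (Real.sqrt ∘ fun i => hH.eigenvalues i ^ 2))).sum
          = ∑ i, Real.sqrt (hH.eigenvalues i ^ 2) from (Finset.sum_eq_multiset_sum ..).symm]
      exact Finset.sum_congr rfl fun i _ => Real.sqrt_sq_eq_abs _
    rw [hlabcd] at h1
    simp only [Multiset.map_coe, Multiset.sum_coe, List.map, List.sum_cons, List.sum_nil,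
      add_zero] at h1
    linarith
  have hconc : concurrence (∑ i, p i • pureState (ψ i))
      = max 0 (Real.sqrt d - Real.sqrt c - Real.sqrt b - Real.sqrt a) := by
    simp only [concurrence]
    rw [← hl, hlabcd]
    simp [List.getD]
  rw [hconc, hRHS]
  apply max_lt
  · rw [← hRHS]
    exact hent
  · have hkey := key4' hH.eigenvalues hEne hprodE i₀
    have hsd : Real.sqrt d = |hH.eigenvalues i₀| := by rw [← hi₀, Real.sqrt_sq_eq_abs]
    have hrw : Real.sqrt d - Real.sqrt c - Real.sqrt b - Real.sqrt a
        = 2 * |hH.eigenvalues i₀| - ∑ i, |hH.eigenvalues i| := by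
      rw [← hsqsum, ← hsd]
      ring
    rw [hrw]
    refine lt_of_lt_of_le ?_ habs
    rw [Fin.sum_univ_four, Fin.sum_univ_four]
    exact hkey
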